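/- A functional L of order at most d belongs to D_0[I], I = (f_1,…,f_N), if and only if L(f_i) = 0 for all i and σ_j(L) ∈ D_0[I] for all j = 1,…,n, where σ_j is the anti-derivation operator (ST-closedness). -/

import Mathlib

open MvPolynomial

/-- The constant-coefficient differential operator `∂^β = ∂₁^{β₁} ⋯ ∂ₙ^{βₙ}`
acting on `ℂ[x₁,…,xₙ]`. -/
noncomputable def diffOp {n : ℕ} (β : Fin n →₀ ℕ) : Module.End ℂ (MvPolynomial (Fin n) ℂ) :=
  (List.ofFn fun i : Fin n => ((pderiv (R := ℂ) i).toLinearMap) ^ (β i)).prod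

/-- The differential functional
`Δ_α(f) = (1/(α₁!⋯αₙ!)) ⋅ (∂^{|α|} f / ∂x^α) |_{x = p}`. -/
noncomputable def DeltaAt {n : ℕ} (p : Fin n → ℂ) (α : Fin n →₀ ℕ)
    (f : MvPolynomial (Fin n) ℂ) : ℂ :=
  (∏ i : Fin n, ((α i).factorial : ℂ))⁻¹ * eval p (diffOp α f)

/-- A functional `L = Σ c_α Δ_α` (given by its finitely supported coefficient
vector `c`) applied to a polynomial `f`. -/
noncomputable def applyF {n : ℕ} (p : Fin n → ℂ) (c : (Fin n →₀ ℕ) →₀ ℂ)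
    (f : MvPolynomial (Fin n) ℂ) : ℂ :=
  c.sum fun α a => a * DeltaAt p α f

/-- The local dual space `D_p[I]` of differential functionals (identified with
their coefficient vectors) annihilating the ideal `I` at the point `p`. -/
noncomputable def dualSpace {n : ℕ} (p : Fin n → ℂ) (I : Ideal (MvPolynomial (Fin n) ℂ)) :
    Submodule ℂ ((Fin n →₀ ℕ) →₀ ℂ) :=
  ⨅ f ∈ I, LinearMap.ker (Finsupp.linearCombination ℂ (fun α => DeltaAt p α f))

/-- The total degree `|α|` of a multi-index. -/
def degOf {n : ℕ} (α : Fin n →₀ ℕ) : ℕ := α.sum fun _ k => k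

/-- The anti-derivation operator `σ_j` on functionals:
`σ_j(Δ_α) = Δ_{α − e_j}` if `α_j > 0` and `σ_j(Δ_α) = 0` otherwise.
On coefficient vectors, `(σ_j c)(α) = c(α + e_j)`. -/
noncomputable def sigmaOp {n : ℕ} (j : Fin n) (c : (Fin n →₀ ℕ) →₀ ℂ) :
    (Fin n →₀ ℕ) →₀ ℂ :=
  Finsupp.comapDomain (fun α => α + Finsupp.single j 1) c
    (fun _ _ _ _ h => by simpa using h)

lemma pderiv_pow_monomial {n : ℕ} (i : Fin n) (k : ℕ) (γ : Fin n →₀ ℕ) (b : ℂ) :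
    (((pderiv (R := ℂ) i).toLinearMap) ^ k) (monomial γ b) =
      monomial (γ - Finsupp.single i k) (b * ((γ i).descFactorial k : ℂ)) := by
  induction k generalizing γ b with
  | zero => simp
  | succ k ih =>
      rw [pow_succ, Module.End.mul_apply]
      have h1 : ((pderiv (R := ℂ) i).toLinearMap) (monomial γ b)
          = monomial (γ - Finsupp.single i 1) (b * (γ i : ℂ)) := by
        simp [pderiv_monomial]
      rw [h1, ih]
      have he : γ - Finsupp.single i 1 - Finsupp.single i k = γ - Finsupp.single i (k + 1) := by
        rw [tsub_tsub, ← Finsupp.single_add, add_comm 1 k]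
      have hv : ((γ - Finsupp.single i 1) : Fin n →₀ ℕ) i = γ i - 1 := by
        rw [Finsupp.tsub_apply, Finsupp.single_eq_same]
      have hc : (γ i : ℂ) * ((γ i - 1).descFactorial k : ℂ) = ((γ i).descFactorial (k + 1) : ℂ) := by
        cases hgi : γ i with
        | zero => simp
        | succ m => push_cast [Nat.succ_sub_one, Nat.succ_descFactorial_succ]; ring
      rw [he, hv]
      rw [mul_assoc, hc]

lemma list_single_sum_apply {n : ℕ} (α : Fin n →₀ ℕ) (i : Fin n) :
    ∀ (l : List (Fin n)), i ∉ l → ((l.map fun j => Finsupp.single j (α j)).sum) i = 0 := by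
  intro l
  induction l with
  | nil => simp
  | cons j t ih =>
      intro hi
      simp only [List.map_cons, List.sum_cons, Finsupp.add_apply]
      simp only [List.mem_cons, not_or] at hi
      rw [ih hi.2, add_zero, Finsupp.single_apply, if_neg (fun h => hi.1 h.symm)]

lemma diffOp_monomial_aux {n : ℕ} (α : Fin n →₀ ℕ) (b : ℂ) :
    ∀ (l : List (Fin n)), l.Nodup → ∀ (β : Fin n →₀ ℕ),
    ((l.map fun i => ((pderiv (R := ℂ) i).toLinearMap) ^ (α i)).prod) (monomial β b) =
      monomial (β - (l.map fun i => Finsupp.single i (α i)).sum)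
        (b * (l.map fun i => ((β i).descFactorial (α i) : ℂ)).prod) := by
  intro l
  induction l with
  | nil => intro _ β; simp
  | cons i t ih =>
      intro hnd β
      have hit : i ∉ t := (List.nodup_cons.1 hnd).1
      simp only [List.map_cons, List.prod_cons, List.sum_cons, Module.End.mul_apply]
      rw [ih (List.nodup_cons.1 hnd).2 β, pderiv_pow_monomial]
      have hS : (β - (t.map fun j => Finsupp.single j (α j)).sum) i = β i := by
        rw [Finsupp.tsub_apply, list_single_sum_apply α i t hit, Nat.sub_zero]
      rw [hS, tsub_tsub, add_comm]
      ring_nf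

lemma diffOp_monomial {n : ℕ} (α β : Fin n →₀ ℕ) (b : ℂ) :
    diffOp α (monomial β b) =
      monomial (β - α) (b * ∏ i : Fin n, ((β i).descFactorial (α i) : ℂ)) := by
  have h := diffOp_monomial_aux α b (List.finRange n) (List.nodup_finRange n) β
  have hofn : (List.ofFn fun i : Fin n => ((pderiv (R := ℂ) i).toLinearMap) ^ (α i))
      = (List.finRange n).map fun i => ((pderiv (R := ℂ) i).toLinearMap) ^ (α i) :=
    List.ofFn_eq_map
  have hsum : ((List.finRange n).map fun i => Finsupp.single i (α i)).sum
      = α := by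
    rw [← List.ofFn_eq_map, List.sum_ofFn]
    ext a
    rw [Finsupp.finset_sum_apply]
    simp [Finsupp.single_apply]
  have hprod : ((List.finRange n).map fun i => ((β i).descFactorial (α i) : ℂ)).prod
      = ∏ i : Fin n, ((β i).descFactorial (α i) : ℂ) := by
    rw [← List.ofFn_eq_map, List.prod_ofFn]
  rw [diffOp, hofn, h, hsum, hprod]

lemma eval_zero_monomial {n : ℕ} (e : Fin n →₀ ℕ) (b : ℂ) :
    eval (0 : Fin n → ℂ) (monomial e b) = if e = 0 then b else 0 := by
  rw [eval_monomial]
  by_cases he : e = 0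
  · subst he
    rw [if_pos rfl, Finsupp.prod_zero_index, mul_one]
  · rw [if_neg he]
    obtain ⟨i, hi⟩ : ∃ i, e i ≠ 0 := by
      by_contra h; push_neg at h; exact he (Finsupp.ext fun i => h i)
    have : Finsupp.prod e (fun i k => (0 : Fin n → ℂ) i ^ k) = 0 := by
      apply Finset.prod_eq_zero (Finsupp.mem_support_iff.2 hi)
      simp [zero_pow hi]
    rw [this, mul_zero]

lemma deltaAt_eq_coeff {n : ℕ} (α : Fin n →₀ ℕ) (g : MvPolynomial (Fin n) ℂ) :
    DeltaAt (0 : Fin n → ℂ) α g = coeff α g := by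
  have hfac : (∏ i : Fin n, ((α i).factorial : ℂ)) ≠ 0 :=
    Finset.prod_ne_zero_iff.2 fun i _ =>
      Nat.cast_ne_zero.2 (Nat.factorial_pos _).ne'
  induction g using MvPolynomial.induction_on' with
  | add p q hp hq =>
      rw [coeff_add, ← hp, ← hq, DeltaAt, DeltaAt, DeltaAt, map_add, map_add, mul_add]
  | monomial β b =>
      rw [DeltaAt, diffOp_monomial, eval_zero_monomial, coeff_monomial]
      rcases eq_or_ne β α with rfl | hne
      · rw [if_pos (tsub_self β), if_pos rfl]
        have hd : ∀ i : Fin n, ((β i).descFactorial (β i) : ℂ) = ((β i).factorial : ℂ) := by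
          intro i; rw [Nat.descFactorial_self]
        simp only [hd]
        field_simp
      · rw [if_neg hne]
        by_cases hle : β ≤ α
        · rw [if_pos (tsub_eq_zero_of_le hle)]
          obtain ⟨i, hi⟩ : ∃ i, β i < α i := by
            by_contra h; push_neg at h
            exact hne (le_antisymm hle (Finsupp.le_def.2 h))
          have hz : ∀ x : Fin n →₀ ℕ, True := fun _ => trivial
          have : ∏ i : Fin n, ((β i).descFactorial (α i) : ℂ) = 0 := by
            apply Finset.prod_eq_zero (Finset.mem_univ i)
            rw [Nat.descFactorial_eq_zero_iff_lt.2 hi]; simp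
          rw [this, mul_zero, mul_zero]
        · rw [if_neg, mul_zero]
          intro h
          apply hle
          intro i
          have h2 := Finsupp.ext_iff.1 h i
          rw [Finsupp.tsub_apply] at h2
          exact Nat.le_of_sub_eq_zero (by simpa using h2)

lemma applyF_eq {n : ℕ} (c : (Fin n →₀ ℕ) →₀ ℂ) (g : MvPolynomial (Fin n) ℂ) :
    applyF (0 : Fin n → ℂ) c g = ∑ α ∈ c.support, c α * coeff α g := by
  rw [applyF, Finsupp.sum]
  exact Finset.sum_congr rfl fun α _ => by rw [deltaAt_eq_coeff]

lemma mem_dualSpace_iff {n : ℕ} (c : (Fin n →₀ ℕ) →₀ ℂ) (I : Ideal (MvPolynomial (Fin n) ℂ)) :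
    c ∈ dualSpace (0 : Fin n → ℂ) I ↔ ∀ g ∈ I, applyF (0 : Fin n → ℂ) c g = 0 := by
  simp only [dualSpace, Submodule.mem_iInf, LinearMap.mem_ker,
    Finsupp.linearCombination_apply, applyF, smul_eq_mul]

lemma sigmaOp_apply {n : ℕ} (j : Fin n) (c : (Fin n →₀ ℕ) →₀ ℂ) (α : Fin n →₀ ℕ) :
    sigmaOp j c α = c (α + Finsupp.single j 1) := rfl

lemma applyF_sigma {n : ℕ} (j : Fin n) (c : (Fin n →₀ ℕ) →₀ ℂ) (g : MvPolynomial (Fin n) ℂ) :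
    applyF (0 : Fin n → ℂ) (sigmaOp j c) g = applyF (0 : Fin n → ℂ) c (X j * g) := by
  classical
  rw [applyF_eq, applyF_eq]
  have hXmul : ∀ β : Fin n →₀ ℕ, coeff β (X j * g) =
      if β j ≠ 0 then coeff (β - Finsupp.single j 1) g else 0 := by
    intro β
    rw [coeff_X_mul']
    simp [Finsupp.mem_support_iff]
  rw [← Finset.sum_filter_of_ne (p := fun β => β j ≠ 0)
    (s := c.support) (f := fun β => c β * coeff β (X j * g))
    (by intro β _ hne; by_contra h; exact hne (show c β * coeff β (X j * g) = 0 by rw [hXmul β, if_neg (not_not_intro h), mul_zero]))]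
  refine Finset.sum_nbij' (fun β => β - Finsupp.single j 1) (fun α => α + Finsupp.single j 1)
    ?_ ?_ ?_ ?_ ?_ |>.symm
  · intro β hβ
    simp only [Finset.mem_filter, Finsupp.mem_support_iff] at hβ
    have hle : Finsupp.single j 1 ≤ β := by
      rw [Finsupp.single_le_iff]; omega
    rw [Finsupp.mem_support_iff, sigmaOp_apply,
      tsub_add_cancel_of_le hle]
    exact hβ.1
  · intro α hα
    rw [Finsupp.mem_support_iff, sigmaOp_apply] at hα
    simp only [Finset.mem_filter, Finsupp.mem_support_iff]
    refine ⟨hα, ?_⟩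
    simp [Finsupp.add_apply]
  · intro β hβ
    simp only [Finset.mem_filter, Finsupp.mem_support_iff] at hβ
    have hle : Finsupp.single j 1 ≤ β := by
      rw [Finsupp.single_le_iff]; omega
    exact tsub_add_cancel_of_le hle
  · intro α _
    exact add_tsub_cancel_right _ _
  · intro β hβ
    simp only [Finset.mem_filter, Finsupp.mem_support_iff] at hβ
    have hle : Finsupp.single j 1 ≤ β := by
      rw [Finsupp.single_le_iff]; omega
    rw [hXmul β, if_pos hβ.2, sigmaOp_apply,
      tsub_add_cancel_of_le hle]

lemma applyF_finset_sum {n : ℕ} (c : (Fin n →₀ ℕ) →₀ ℂ) {ι : Type*} (s : Finset ι)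
    (F : ι → MvPolynomial (Fin n) ℂ) :
    applyF (0 : Fin n → ℂ) c (∑ t ∈ s, F t) = ∑ t ∈ s, applyF (0 : Fin n → ℂ) c (F t) := by
  simp only [applyF_eq, coeff_sum, Finset.mul_sum]
  exact Finset.sum_comm

lemma applyF_smul {n : ℕ} (c : (Fin n →₀ ℕ) →₀ ℂ) (a : ℂ) (g : MvPolynomial (Fin n) ℂ) :
    applyF (0 : Fin n → ℂ) c (a • g) = a * applyF (0 : Fin n → ℂ) c g := by
  simp only [applyF_eq, coeff_smul, smul_eq_mul, Finset.mul_sum]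
  exact Finset.sum_congr rfl fun α _ => by ring

/-- ST-closedness: a functional `L` of order at most `d` belongs
to `D_0[I]`, `I = (f₁,…,f_N)`, if and only if `L(f_i) = 0` for all `i` and
`σ_j(L) ∈ D_0[I]` for all `j = 1,…,n`. -/
theorem ST_closedness {n N d : ℕ} (f : Fin N → MvPolynomial (Fin n) ℂ)
    (hf0 : ∀ i, eval (0 : Fin n → ℂ) (f i) = 0)
    (c : (Fin n →₀ ℕ) →₀ ℂ)
    (hord : ∀ α ∈ c.support, degOf α ≤ d) :
    c ∈ dualSpace (0 : Fin n → ℂ) (Ideal.span (Set.range f)) ↔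
      (∀ i, applyF (0 : Fin n → ℂ) c (f i) = 0) ∧
      (∀ j : Fin n, sigmaOp j c ∈ dualSpace (0 : Fin n → ℂ) (Ideal.span (Set.range f))) := by
  constructor
  · intro h
    rw [mem_dualSpace_iff] at h
    refine ⟨fun i => h (f i) (Ideal.subset_span ⟨i, rfl⟩), fun j => ?_⟩
    rw [mem_dualSpace_iff]
    intro g hg
    rw [applyF_sigma]
    exact h _ (Ideal.mul_mem_left _ _ hg)
  · rintro ⟨h1, h2⟩
    rw [mem_dualSpace_iff]
    intro g hg
    refine Submodule.span_induction
      (p := fun x _ => applyF (0 : Fin n → ℂ) c x = 0) ?_ ?_ ?_ ?_ hg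
    · rintro x ⟨i, rfl⟩; exact h1 i
    · show applyF (0 : Fin n → ℂ) c 0 = 0
      rw [applyF_eq]; simp
    · intro x y _ _ hpx hpy
      show applyF (0 : Fin n → ℂ) c (x + y) = 0
      rw [applyF_eq] at hpx hpy ⊢
      simp only [coeff_add, mul_add, Finset.sum_add_distrib, hpx, hpy, add_zero]
    · intro r x hx hpx
      show applyF (0 : Fin n → ℂ) c (r • x) = 0
      rw [smul_eq_mul]
      conv_lhs => rw [r.as_sum, Finset.sum_mul]
      rw [applyF_finset_sum]
      refine Finset.sum_eq_zero fun β _ => ?_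
      by_cases hβ : β = 0
      · subst hβ
        rw [monomial_zero', C_mul', applyF_smul, hpx, mul_zero]
      · obtain ⟨j, hj⟩ : ∃ j, β j ≠ 0 := by
          by_contra h; push_neg at h; exact hβ (Finsupp.ext fun j => h j)
        have hle : Finsupp.single j 1 ≤ β := by
          rw [Finsupp.single_le_iff]; omega
        have hsplit : monomial β (coeff β r) * x
            = X j * ((monomial (β - Finsupp.single j 1) (coeff β r)) * x) := by
          rw [← mul_assoc]
          congr 1
          rw [X, monomial_mul, one_mul, add_tsub_cancel_of_le hle]
        rw [hsplit, ← applyF_sigma]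
        exact (mem_dualSpace_iff _ _).mp (h2 j) _ (Ideal.mul_mem_left _ _ hx)
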